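/- Let ϱ_{1|0} ∈ M_{d₀}(ℂ) ⊗ M_{d₁}(ℂ) and ϱ_{2|1} ∈ M_{d₁}(ℂ) ⊗ M_{d₂}(ℂ) be positive semidefinite matrices satisfying Tr_{H₁}[ϱ_{1|0}] = 𝟙_{d₀} and Tr_{H₂}[ϱ_{2|1}] = 𝟙_{d₁} (partial traces over the respective output factors). Then the matrix ϱ_{2|0} := Tr_{H₁}[ (𝟙_{d₀} ⊗ ϱ_{2|1})^{T_{H₁}} (ϱ_{1|0} ⊗ 𝟙_{d₂}) ] ∈ M_{d₀}(ℂ) ⊗ M_{d₂}(ℂ) is positive semidefinite and satisfies Tr_{H₂}[ϱ_{2|0}] = 𝟙_{d₀}; i.e., the link-product composition of two CPTP Choi matrices is again a CPTP Choi matrix. -/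

import Mathlib

open Matrix Kronecker
open scoped ComplexOrder

noncomputable section

/-- Jamiołkowski image of a linear map `N : M_a(ℂ) → M_b(ℂ)`:
`ρ = Σ_{i,j} |i⟩⟨j| ⊗ N(|j⟩⟨i|)`. -/
def jamImage {a b : ℕ} (N : Matrix (Fin a) (Fin a) ℂ →ₗ[ℂ] Matrix (Fin b) (Fin b) ℂ) :
    Matrix (Fin a × Fin b) (Fin a × Fin b) ℂ :=
  ∑ i : Fin a, ∑ j : Fin a,
    Matrix.single i j (1 : ℂ) ⊗ₖ N (Matrix.single j i (1 : ℂ))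

/-- Partial transpose on the first tensor factor of `M_a(ℂ) ⊗ M_b(ℂ)`. -/
def ptransposeA {a b : ℕ} (ρ : Matrix (Fin a × Fin b) (Fin a × Fin b) ℂ) :
    Matrix (Fin a × Fin b) (Fin a × Fin b) ℂ :=
  Matrix.of fun p q => ρ (q.1, p.2) (p.1, q.2)

/-- Partial trace over the second tensor factor. -/
def ptraceB {a b : ℕ} (ρ : Matrix (Fin a × Fin b) (Fin a × Fin b) ℂ) :
    Matrix (Fin a) (Fin a) ℂ :=
  Matrix.of fun i j => ∑ k : Fin b, ρ (i, k) (j, k)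

/-- Partial trace over the first tensor factor. -/
def ptraceA {a b : ℕ} (ρ : Matrix (Fin a × Fin b) (Fin a × Fin b) ℂ) :
    Matrix (Fin b) (Fin b) ℂ :=
  Matrix.of fun k l => ∑ i : Fin a, ρ (i, k) (i, l)

/-- The extension `id_n ⊗ Φ` of a map `Φ` on matrices, acting on `M_n(ℂ) ⊗ M_a(ℂ)`. -/
def idTensor {n a b : ℕ} (Φ : Matrix (Fin a) (Fin a) ℂ → Matrix (Fin b) (Fin b) ℂ)
    (X : Matrix (Fin n × Fin a) (Fin n × Fin a) ℂ) :
    Matrix (Fin n × Fin b) (Fin n × Fin b) ℂ :=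
  Matrix.of fun p q => Φ (Matrix.of fun i j => X (p.1, i) (q.1, j)) p.2 q.2

/-- Complete positivity: every identity extension `id_n ⊗ Φ` preserves positive
semidefiniteness. -/
def IsCP {a b : ℕ} (Φ : Matrix (Fin a) (Fin a) ℂ → Matrix (Fin b) (Fin b) ℂ) : Prop :=
  ∀ (n : ℕ) (X : Matrix (Fin n × Fin a) (Fin n × Fin a) ℂ),
    X.PosSemidef → (idTensor Φ X).PosSemidef

/-- Trace preservation. -/
def IsTP {a b : ℕ} (Φ : Matrix (Fin a) (Fin a) ℂ → Matrix (Fin b) (Fin b) ℂ) : Prop :=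
  ∀ σ, (Φ σ).trace = σ.trace

/-- Embedding `𝟙_{d₀} ⊗ B` of `B ∈ M_{d₁}(ℂ) ⊗ M_{d₂}(ℂ)` into the three-factor space. -/
def emb12 {d₀ d₁ d₂ : ℕ} (B : Matrix (Fin d₁ × Fin d₂) (Fin d₁ × Fin d₂) ℂ) :
    Matrix (Fin d₀ × Fin d₁ × Fin d₂) (Fin d₀ × Fin d₁ × Fin d₂) ℂ :=
  (1 : Matrix (Fin d₀) (Fin d₀) ℂ) ⊗ₖ B

/-- Embedding `B ⊗ 𝟙_{d₂}` of `B ∈ M_{d₀}(ℂ) ⊗ M_{d₁}(ℂ)` into the three-factor space. -/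
def emb01 {d₀ d₁ d₂ : ℕ} (B : Matrix (Fin d₀ × Fin d₁) (Fin d₀ × Fin d₁) ℂ) :
    Matrix (Fin d₀ × Fin d₁ × Fin d₂) (Fin d₀ × Fin d₁ × Fin d₂) ℂ :=
  Matrix.of fun p q => B (p.1, p.2.1) (q.1, q.2.1) * (if p.2.2 = q.2.2 then 1 else 0)

/-- Partial transposition on the middle factor of the three-factor space. -/
def ptransposeMid {d₀ d₁ d₂ : ℕ}
    (A : Matrix (Fin d₀ × Fin d₁ × Fin d₂) (Fin d₀ × Fin d₁ × Fin d₂) ℂ) :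
    Matrix (Fin d₀ × Fin d₁ × Fin d₂) (Fin d₀ × Fin d₁ × Fin d₂) ℂ :=
  Matrix.of fun p q => A (p.1, q.2.1, p.2.2) (q.1, p.2.1, q.2.2)

/-- Partial trace over the middle factor of the three-factor space. -/
def ptraceMid {d₀ d₁ d₂ : ℕ}
    (A : Matrix (Fin d₀ × Fin d₁ × Fin d₂) (Fin d₀ × Fin d₁ × Fin d₂) ℂ) :
    Matrix (Fin d₀ × Fin d₂) (Fin d₀ × Fin d₂) ℂ :=
  Matrix.of fun p q => ∑ m : Fin d₁, A (p.1, m, p.2) (q.1, m, q.2)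

/-- The link-product composition
`Tr_{H₁}[ (𝟙_{d₀} ⊗ ϱ_{2|1})^{T_{H₁}} (ϱ_{1|0} ⊗ 𝟙_{d₂}) ]`. -/
def linkProd {d₀ d₁ d₂ : ℕ} (ϱ10 : Matrix (Fin d₀ × Fin d₁) (Fin d₀ × Fin d₁) ℂ)
    (ϱ21 : Matrix (Fin d₁ × Fin d₂) (Fin d₁ × Fin d₂) ℂ) :
    Matrix (Fin d₀ × Fin d₂) (Fin d₀ × Fin d₂) ℂ :=
  ptraceMid (ptransposeMid (emb12 ϱ21) * emb01 ϱ10)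

lemma Matrix.posSemidef_iff_eq_transpose_mul_self {n : Type*} [Fintype n] [DecidableEq n]
    {A : Matrix n n ℂ} : A.PosSemidef ↔ ∃ B : Matrix n n ℂ, A = Bᴴ * B := by
  open scoped MatrixOrder in
  constructor
  · intro hA
    obtain ⟨X, hX, -, hXe⟩ :=
      sub_zero A ▸ CFC.exists_sqrt_of_isSelfAdjoint_of_quasispectrumRestricts hA.isHermitian
        (QuasispectrumRestricts.nnreal_of_nonneg hA.nonneg)
    exact ⟨X, by rw [sub_zero] at hXe; rw [← hXe, ← Matrix.star_eq_conjTranspose, hX.star_eq]⟩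
  · rintro ⟨B, rfl⟩
    exact Matrix.posSemidef_conjTranspose_mul_self B

def eq4 {α β γ δ : Type*} : (γ × δ × α × β) ≃ (α × β × γ × δ) where
  toFun x := (x.2.2.1, x.2.2.2, x.1, x.2.1)
  invFun x := (x.2.2.1, x.2.2.2, x.1, x.2.1)
  left_inv x := rfl
  right_inv x := rfl

lemma sum4 {α β γ δ M : Type*} [Fintype α] [Fintype β] [Fintype γ] [Fintype δ]
    [AddCommMonoid M] (f : α → β → γ → δ → M) :
    ∑ a, ∑ b, ∑ c, ∑ d, f a b c d = ∑ c, ∑ d, ∑ a, ∑ b, f a b c d := by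
  have h1 : (∑ a, ∑ b, ∑ c, ∑ d, f a b c d)
      = ∑ x : α × β × γ × δ, f x.1 x.2.1 x.2.2.1 x.2.2.2 := by
    simp only [Fintype.sum_prod_type]
  have h2 : (∑ c, ∑ d, ∑ a, ∑ b, f a b c d)
      = ∑ x : γ × δ × α × β, f x.2.2.1 x.2.2.2 x.1 x.2.1 := by
    simp only [Fintype.sum_prod_type]
  rw [h1, h2]
  exact (Fintype.sum_equiv (eq4 (α := α) (β := β) (γ := γ) (δ := δ))
    (fun x => f x.2.2.1 x.2.2.2 x.1 x.2.1) (fun x => f x.1 x.2.1 x.2.2.1 x.2.2.2)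
    fun x => rfl).symm

lemma linkProd_apply {d₀ d₁ d₂ : ℕ} (ϱ10 : Matrix (Fin d₀ × Fin d₁) (Fin d₀ × Fin d₁) ℂ)
    (ϱ21 : Matrix (Fin d₁ × Fin d₂) (Fin d₁ × Fin d₂) ℂ) (p q : Fin d₀ × Fin d₂) :
    linkProd ϱ10 ϱ21 p q =
      ∑ m : Fin d₁, ∑ n : Fin d₁, ϱ10 (p.1, n) (q.1, m) * ϱ21 (n, p.2) (m, q.2) := by
  simp only [linkProd, ptraceMid, ptransposeMid, emb12, emb01, Matrix.mul_apply,
    Matrix.of_apply, kroneckerMap_apply, Matrix.one_apply, Fintype.sum_prod_type,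
    ite_mul, one_mul, zero_mul, mul_ite, mul_one, mul_zero, Finset.sum_ite_eq,
    Finset.sum_ite_eq', Finset.mem_univ, if_true]
  have key : ∀ (x : Fin d₁), (∑ x_1 : Fin d₀, ∑ x_2 : Fin d₁,
      if p.1 = x_1 then ϱ21 (x_2, p.2) (x, q.2) * ϱ10 (x_1, x_2) (q.1, x) else 0) =
      ∑ x_2 : Fin d₁, ϱ21 (x_2, p.2) (x, q.2) * ϱ10 (p.1, x_2) (q.1, x) := by
    intro x
    rw [Finset.sum_comm]
    simp
  simp only [key]
  exact Finset.sum_congr rfl fun m _ => Finset.sum_congr rfl fun n _ => mul_comm _ _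

/-- the link-product composition of two CPTP Choi matrices is again a CPTP
Choi matrix: it is positive semidefinite and its partial trace over the output factor is
the identity. -/
theorem statement8 {d₀ d₁ d₂ : ℕ}
    (ϱ10 : Matrix (Fin d₀ × Fin d₁) (Fin d₀ × Fin d₁) ℂ)
    (ϱ21 : Matrix (Fin d₁ × Fin d₂) (Fin d₁ × Fin d₂) ℂ)
    (h10 : ϱ10.PosSemidef) (h21 : ϱ21.PosSemidef)
    (ht10 : ptraceB ϱ10 = 1) (ht21 : ptraceB ϱ21 = 1) :
    (linkProd ϱ10 ϱ21).PosSemidef ∧ ptraceB (linkProd ϱ10 ϱ21) = 1 := by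
  constructor
  · obtain ⟨D, hD⟩ := Matrix.posSemidef_iff_eq_transpose_mul_self.mp h10
    obtain ⟨C, hC⟩ := Matrix.posSemidef_iff_eq_transpose_mul_self.mp h21
    set E : Matrix ((Fin d₁ × Fin d₂) × (Fin d₀ × Fin d₁)) (Fin d₀ × Fin d₂) ℂ :=
      Matrix.of fun st jl => ∑ m : Fin d₁, D st.2 (jl.1, m) * C st.1 (m, jl.2) with hE
    have : linkProd ϱ10 ϱ21 = Eᴴ * E := by
      ext p q
      rw [linkProd_apply, hD, hC]
      conv_rhs => rw [Matrix.mul_apply, Fintype.sum_prod_type]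
      simp only [Matrix.mul_apply, Matrix.conjTranspose_apply, hE, Matrix.of_apply,
        star_sum, star_mul', Finset.sum_mul, Finset.mul_sum]
      rw [sum4 (f := fun m n s t => star (D t (p.1, n)) * D t (q.1, m) *
        (star (C s (n, p.2)) * C s (m, q.2)))]
      refine Finset.sum_congr rfl fun s _ => Finset.sum_congr rfl fun t _ =>
        Finset.sum_congr rfl fun m _ => Finset.sum_congr rfl fun n _ => by ring
    rw [this]
    exact Matrix.posSemidef_conjTranspose_mul_self E
  · ext i j
    have hlp : ∀ k, linkProd ϱ10 ϱ21 (i, k) (j, k) =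
        ∑ m : Fin d₁, ∑ n : Fin d₁, ϱ10 (i, n) (j, m) * ϱ21 (n, k) (m, k) :=
      fun k => linkProd_apply ϱ10 ϱ21 (i, k) (j, k)
    have : ptraceB (linkProd ϱ10 ϱ21) i j
        = ∑ m : Fin d₁, ∑ n : Fin d₁, ϱ10 (i, n) (j, m) * (ptraceB ϱ21) n m := by
      simp only [ptraceB, Matrix.of_apply, hlp]
      rw [Finset.sum_comm]
      refine Finset.sum_congr rfl fun m _ => ?_
      rw [Finset.sum_comm]
      exact Finset.sum_congr rfl fun n _ => (Finset.mul_sum _ _ _).symm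
    rw [this, ht21]
    calc (∑ m : Fin d₁, ∑ n : Fin d₁, ϱ10 (i, n) (j, m) * (1 : Matrix (Fin d₁) (Fin d₁) ℂ) n m)
        = ∑ m : Fin d₁, ϱ10 (i, m) (j, m) := by
          simp [Matrix.one_apply, mul_ite, mul_one, mul_zero]
      _ = ptraceB ϱ10 i j := rfl
      _ = (1 : Matrix (Fin d₀) (Fin d₀) ℂ) i j := by rw [ht10]
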